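/- Let Y be a stationary process on a finite alphabet 𝒴 and let r: 𝒴^k → 𝒴 be any predictor with error probability P_e := Pr( r(Y_1^k) ≠ Y_{k+1} ). Then I(Y_{k+1}; Y_1^k) ≥ I(Y_{k+1}; r(Y_1^k)) ≥ −log( max_{y ∈ 𝒴} p_Y(y) ) · (1 − P_e) − h(P_e), where h(p) := −p log p − (1−p) log(1−p) is the binary entropy function and p_Y is the marginal distribution of Y_1. -/

import Mathlib

open MeasureTheory Filter

section Processes

variable {Ω : Type*} [MeasurableSpace Ω]

/-- The segment (Z_m, ..., Z_{m+n-1}) of a discrete-time process (0-based indexing, so that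
`procSeg Z 0 n` is the block Z_1^n of the paper). -/
def procSeg {𝒵 : Type*} (Z : ℕ → Ω → 𝒵) (m n : ℕ) : Ω → Fin n → 𝒵 :=
  fun ω i => Z (m + i.val) ω

/-- The probability that the observable `W` takes the value `a`. -/
noncomputable def prOf {α : Type*} (μ : Measure Ω) (W : Ω → α) (a : α) : ℝ :=
  (μ (W ⁻¹' {a})).toReal

/-- Shannon entropy of a finitely-valued observable. -/
noncomputable def entOf {α : Type*} [Fintype α] (μ : Measure Ω) (W : Ω → α) : ℝ :=
  ∑ a : α, Real.negMulLog (prOf μ W a)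

/-- Conditional Shannon entropy H(A | B). -/
noncomputable def condEntOf {α β : Type*} [Fintype α] [Fintype β] (μ : Measure Ω)
    (A : Ω → α) (B : Ω → β) : ℝ :=
  entOf μ (fun ω => (A ω, B ω)) - entOf μ B

/-- Mutual information I(A ; B). -/
noncomputable def mutInfOf {α β : Type*} [Fintype α] [Fintype β] (μ : Measure Ω)
    (A : Ω → α) (B : Ω → β) : ℝ :=
  entOf μ A + entOf μ B - entOf μ (fun ω => (A ω, B ω))

/-- A process with finite alphabet is stationary iff all its finite-dimensional distributions
are invariant under the time shift. -/
def StationaryProc {𝒵 : Type*} (μ : Measure Ω) (Z : ℕ → Ω → 𝒵) : Prop :=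
  ∀ n : ℕ, ∀ z : Fin n → 𝒵,
    μ {ω | ∀ i : Fin n, Z i.val ω = z i} = μ {ω | ∀ i : Fin n, Z (i.val + 1) ω = z i}

/-- `Z` is a (time-homogeneous) `k`-th order Markov chain with transition matrix `P`:
for every n ≥ k, Z_{n+1} is conditionally independent of Z_1^{n-k} given Z_{n-k+1}^n, and the
conditional probabilities are given by `P` (time-homogeneity). -/
def IsMarkovOrder {𝒵 : Type*} (μ : Measure Ω) (Z : ℕ → Ω → 𝒵) (k : ℕ)
    (P : (Fin k → 𝒵) → 𝒵 → ℝ) : Prop :=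
  ∀ n : ℕ, ∀ hn : k ≤ n, ∀ z : Fin n → 𝒵, ∀ j : 𝒵,
    prOf μ (procSeg Z 0 (n + 1)) (Fin.snoc z j) =
      prOf μ (procSeg Z 0 n) z *
        P (fun i : Fin k => z ⟨n - k + i.val, by have := i.isLt; omega⟩) j

end Processes

section Stmt8Aux

/-- A single Kullback-Leibler term `a * (log a - log b)`. -/
noncomputable def klT (a b : ℝ) : ℝ := a * (Real.log a - Real.log b)

@[simp] lemma klT_zero_left (b : ℝ) : klT 0 b = 0 := by simp [klT]

/-- The log-sum inequality. -/
lemma klT_sum_le {ι : Type*} (s : Finset ι) (a b : ι → ℝ)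
    (ha : ∀ i ∈ s, 0 ≤ a i) (hb : ∀ i ∈ s, 0 ≤ b i)
    (hab : ∀ i ∈ s, b i = 0 → a i = 0) :
    klT (∑ i ∈ s, a i) (∑ i ∈ s, b i) ≤ ∑ i ∈ s, klT (a i) (b i) := by
  set A := ∑ i ∈ s, a i with hA
  set B := ∑ i ∈ s, b i with hB
  have hBnn : 0 ≤ B := Finset.sum_nonneg hb
  rcases eq_or_lt_of_le hBnn with hB0 | hBpos
  · have hb0 : ∀ i ∈ s, b i = 0 := by
      intro i hi
      exact (Finset.sum_eq_zero_iff_of_nonneg hb).mp hB0.symm i hi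
    have ha0 : ∀ i ∈ s, a i = 0 := fun i hi => hab i hi (hb0 i hi)
    have hA0 : A = 0 := Finset.sum_eq_zero ha0
    rw [hA0, klT_zero_left]
    apply Finset.sum_nonneg
    intro i hi
    rw [ha0 i hi, klT_zero_left]
  · -- Jensen for x ↦ x * log x with weights b i / B and points a i / b i
    have hj := Real.convexOn_mul_log.map_sum_le (t := s) (w := fun i => b i / B)
      (p := fun i => a i / b i)
      (fun i hi => div_nonneg (hb i hi) hBnn)
      (by rw [← Finset.sum_div, ← hB, div_self hBpos.ne'])
      (fun i hi => by
        have : (0:ℝ) ≤ a i / b i := div_nonneg (ha i hi) (hb i hi)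
        simpa using this)
    have hwp : ∑ i ∈ s, (b i / B) • (a i / b i) = A / B := by
      rw [hA, Finset.sum_div]
      apply Finset.sum_congr rfl
      intro i hi
      rcases eq_or_lt_of_le (hb i hi) with hbi0 | hbi
      · rw [hab i hi hbi0.symm, ← hbi0]; simp
      · field_simp [hbi.ne']
        linear_combination a i * (B * B⁻¹) * mul_inv_cancel₀ hbi.ne' + a i * mul_inv_cancel₀ hBpos.ne'
    rw [hwp] at hj
    have hterm : ∀ i ∈ s, (b i / B) • ((a i / b i) * Real.log (a i / b i))
        = klT (a i) (b i) / B := by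
      intro i hi
      rcases eq_or_lt_of_le (hb i hi) with hbi0 | hbi
      · rw [hab i hi hbi0.symm, ← hbi0]; simp [klT]
      · rcases eq_or_lt_of_le (ha i hi) with hai0 | hai
        · rw [← hai0]; simp [klT]
        · rw [Real.log_div hai.ne' hbi.ne']
          unfold klT
          field_simp
          linear_combination (a i * (Real.log (a i) - Real.log (b i)) * (B * B⁻¹)) * mul_inv_cancel₀ hbi.ne' + (a i * (Real.log (a i) - Real.log (b i))) * mul_inv_cancel₀ hBpos.ne'
    rw [Finset.sum_congr rfl hterm] at hj
    -- hj : (A/B) * log (A/B) ≤ ∑ klT (a i) (b i) / B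
    have hklAB : klT A B = B * ((A / B) * Real.log (A / B)) := by
      have hAnn : 0 ≤ A := Finset.sum_nonneg ha
      rcases eq_or_lt_of_le hAnn with hA0 | hApos
      · rw [← hA0]; simp [klT]
      · rw [Real.log_div hApos.ne' hBpos.ne']
        unfold klT
        field_simp
    rw [← Finset.sum_div] at hj
    rw [hklAB]
    calc B * ((A / B) * Real.log (A / B))
        ≤ B * ((∑ i ∈ s, klT (a i) (b i)) / B) :=
          mul_le_mul_of_nonneg_left hj hBnn
      _ = ∑ i ∈ s, klT (a i) (b i) := by field_simp

section PrOf

variable {Ω : Type*} [MeasurableSpace Ω]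

lemma prOf_nonneg {α : Type*} (μ : Measure Ω) (W : Ω → α) (a : α) : 0 ≤ prOf μ W a :=
  ENNReal.toReal_nonneg

lemma prOf_mono {α β : Type*} (μ : Measure Ω) [IsProbabilityMeasure μ]
    {V : Ω → α} {W : Ω → β} {a : α} {b : β}
    (h : V ⁻¹' {a} ⊆ W ⁻¹' {b}) : prOf μ V a ≤ prOf μ W b :=
  ENNReal.toReal_mono (measure_ne_top μ _) (measure_mono h)

/-- Decomposition of the distribution of `g ∘ V` over the fibers of `g`. -/
lemma prOf_comp {α β : Type*} [Fintype α] [DecidableEq α] [DecidableEq β]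
    (μ : Measure Ω) [IsProbabilityMeasure μ] (V : Ω → α)
    (hV : ∀ a : α, MeasurableSet (V ⁻¹' {a})) (g : α → β) (b : β) :
    prOf μ (fun ω => g (V ω)) b
      = ∑ a ∈ Finset.univ.filter (fun a => g a = b), prOf μ V a := by
  unfold prOf
  have hset : (fun ω => g (V ω)) ⁻¹' {b}
      = ⋃ a ∈ (Finset.univ.filter (fun a => g a = b) : Finset α), V ⁻¹' {a} := by
    ext ω
    simp only [Set.mem_preimage, Set.mem_singleton_iff, Set.mem_iUnion, Finset.mem_filter,
      Finset.mem_univ, true_and]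
    constructor
    · intro h; exact ⟨V ω, h, rfl⟩
    · rintro ⟨a, hga, hVa⟩; rw [hVa]; exact hga
  rw [hset, measure_biUnion_finset ?_ (fun a _ => hV a)]
  · exact ENNReal.toReal_sum (fun a _ => measure_ne_top μ _)
  · intro x _ y _ hxy
    apply Set.disjoint_left.mpr
    intro ω h1 h2
    simp only [Set.mem_preimage, Set.mem_singleton_iff] at h1 h2
    exact hxy (h1 ▸ h2 ▸ rfl)

lemma sum_prOf {α : Type*} [Fintype α] [DecidableEq α]
    (μ : Measure Ω) [IsProbabilityMeasure μ] (V : Ω → α)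
    (hV : ∀ a : α, MeasurableSet (V ⁻¹' {a})) :
    ∑ a : α, prOf μ V a = 1 := by
  have h := prOf_comp μ V hV (fun _ => ()) ()
  have h1 : prOf μ (fun ω => ()) () = 1 := by
    unfold prOf
    have : (fun (_ : Ω) => ()) ⁻¹' {()} = Set.univ := by ext ω; simp
    rw [this, measure_univ, ENNReal.toReal_one]
  rw [h1] at h
  rw [h]
  apply Finset.sum_congr _ (fun _ _ => rfl)
  ext a; simp

lemma prOf_fst {α β : Type*} [Fintype α] [Fintype β] [DecidableEq α] [DecidableEq β]
    (μ : Measure Ω) [IsProbabilityMeasure μ] (V : Ω → α × β)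
    (hV : ∀ p : α × β, MeasurableSet (V ⁻¹' {p})) (x : α) :
    prOf μ (fun ω => (V ω).1) x = ∑ y : β, prOf μ V (x, y) := by
  rw [prOf_comp μ V hV Prod.fst x, Finset.sum_filter, Fintype.sum_prod_type]
  rw [Finset.sum_eq_single x]
  · apply Finset.sum_congr rfl; intro y _; simp
  · intro a _ hax
    apply Finset.sum_eq_zero; intro y _; simp [hax]
  · simp

lemma prOf_snd {α β : Type*} [Fintype α] [Fintype β] [DecidableEq α] [DecidableEq β]
    (μ : Measure Ω) [IsProbabilityMeasure μ] (V : Ω → α × β)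
    (hV : ∀ p : α × β, MeasurableSet (V ⁻¹' {p})) (y : β) :
    prOf μ (fun ω => (V ω).2) y = ∑ x : α, prOf μ V (x, y) := by
  rw [prOf_comp μ V hV Prod.snd y, Finset.sum_filter, Fintype.sum_prod_type_right]
  rw [Finset.sum_eq_single y]
  · apply Finset.sum_congr rfl; intro x _; simp
  · intro b _ hby
    apply Finset.sum_eq_zero; intro x _; simp [hby]
  · simp

/-- Mutual information as a sum of KL terms. -/
lemma mutInfOf_eq_sum_klT {α β : Type*} [Fintype α] [Fintype β] [DecidableEq α] [DecidableEq β]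
    (μ : Measure Ω) [IsProbabilityMeasure μ] (A : Ω → α) (B : Ω → β)
    (hAB : ∀ p : α × β, MeasurableSet ((fun ω => (A ω, B ω)) ⁻¹' {p})) :
    mutInfOf μ A B = ∑ p : α × β,
      klT (prOf μ (fun ω => (A ω, B ω)) p) (prOf μ A p.1 * prOf μ B p.2) := by
  set P : α × β → ℝ := prOf μ (fun ω => (A ω, B ω)) with hP
  have hmargA : ∀ x : α, prOf μ A x = ∑ y : β, P (x, y) := fun x =>
    prOf_fst μ (fun ω => (A ω, B ω)) hAB x
  have hmargB : ∀ y : β, prOf μ B y = ∑ x : α, P (x, y) := fun y =>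
    prOf_snd μ (fun ω => (A ω, B ω)) hAB y
  have hPA : ∀ p : α × β, P p ≤ prOf μ A p.1 := by
    intro p
    apply prOf_mono
    intro ω hω
    simp only [Set.mem_preimage, Set.mem_singleton_iff] at hω ⊢
    rw [← hω]
  have hPB : ∀ p : α × β, P p ≤ prOf μ B p.2 := by
    intro p
    apply prOf_mono
    intro ω hω
    simp only [Set.mem_preimage, Set.mem_singleton_iff] at hω ⊢
    rw [← hω]
  have hPnn : ∀ p : α × β, 0 ≤ P p := fun p => prOf_nonneg μ _ p
  have hterm : ∀ p : α × β, klT (P p) (prOf μ A p.1 * prOf μ B p.2)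
      = P p * Real.log (P p) - P p * Real.log (prOf μ A p.1)
        - P p * Real.log (prOf μ B p.2) := by
    intro p
    rcases eq_or_lt_of_le (hPnn p) with h0 | hpos
    · rw [← h0]; simp [klT]
    · have hA0 : (0:ℝ) < prOf μ A p.1 := lt_of_lt_of_le hpos (hPA p)
      have hB0 : (0:ℝ) < prOf μ B p.2 := lt_of_lt_of_le hpos (hPB p)
      unfold klT
      rw [Real.log_mul hA0.ne' hB0.ne']
      ring
  rw [Finset.sum_congr rfl (fun p _ => hterm p)]
  unfold mutInfOf entOf
  simp only [Real.negMulLog, neg_mul]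
  rw [Finset.sum_sub_distrib, Finset.sum_sub_distrib]
  have e1 : ∑ p : α × β, P p * Real.log (prOf μ A p.1)
      = ∑ x : α, prOf μ A x * Real.log (prOf μ A x) := by
    rw [Fintype.sum_prod_type]
    apply Finset.sum_congr rfl
    intro x _
    have hx : ∑ y : β, P (x, y) * Real.log (prOf μ A (x, y).1)
        = (∑ y : β, P (x, y)) * Real.log (prOf μ A x) := by
      rw [Finset.sum_mul]
    rw [hx, ← hmargA x]
  have e2 : ∑ p : α × β, P p * Real.log (prOf μ B p.2)
      = ∑ y : β, prOf μ B y * Real.log (prOf μ B y) := by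
    rw [Fintype.sum_prod_type_right]
    apply Finset.sum_congr rfl
    intro y _
    have hy : ∑ x : α, P (x, y) * Real.log (prOf μ B (x, y).2)
        = (∑ x : α, P (x, y)) * Real.log (prOf μ B y) := by
      rw [Finset.sum_mul]
    rw [hy, ← hmargB y]
  rw [e1, e2]
  simp only [Finset.sum_neg_distrib]
  ring

/-- Data processing for sums of KL terms. -/
lemma sum_klT_comp_le {α β : Type*} [Fintype α] [Fintype β] [DecidableEq β]
    (F G : α → ℝ) (g : α → β) (hF : ∀ a, 0 ≤ F a) (hG : ∀ a, 0 ≤ G a)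
    (h : ∀ a, G a = 0 → F a = 0) :
    ∑ b : β, klT (∑ a ∈ Finset.univ.filter (fun a => g a = b), F a)
               (∑ a ∈ Finset.univ.filter (fun a => g a = b), G a)
      ≤ ∑ a : α, klT (F a) (G a) := by
  rw [← Finset.sum_fiberwise Finset.univ g (fun a => klT (F a) (G a))]
  apply Finset.sum_le_sum
  intro b _
  exact klT_sum_le _ _ _ (fun a _ => hF a) (fun a _ => hG a) (fun a _ => h a)

/-- Key lower bound for a KL term. -/
lemma klT_ge (a b c : ℝ) (ha : 0 ≤ a) (hb : 0 ≤ b) (hbc : b ≤ c) (hc : 0 < c)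
    (hab : b = 0 → a = 0) :
    a * Real.log a - a * Real.log c ≤ klT a b := by
  rcases eq_or_lt_of_le ha with h0 | hpos
  · rw [← h0]; simp [klT]
  · have hbpos : 0 < b := by
      rcases eq_or_lt_of_le hb with hb0 | hb0
      · exact absurd (hab hb0.symm) hpos.ne'
      · exact hb0
    have : Real.log b ≤ Real.log c := Real.log_le_log hbpos hbc
    unfold klT
    nlinarith

lemma prOf_pair_le_fst {Ω : Type*} [MeasurableSpace Ω] {α β : Type*}
    (μ : Measure Ω) [IsProbabilityMeasure μ] (A : Ω → α) (B : Ω → β) (p : α × β) :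
    prOf μ (fun ω => (A ω, B ω)) p ≤ prOf μ A p.1 := by
  apply prOf_mono
  intro ω hω
  simp only [Set.mem_preimage, Set.mem_singleton_iff] at hω ⊢
  rw [← hω]

lemma prOf_pair_le_snd {Ω : Type*} [MeasurableSpace Ω] {α β : Type*}
    (μ : Measure Ω) [IsProbabilityMeasure μ] (A : Ω → α) (B : Ω → β) (p : α × β) :
    prOf μ (fun ω => (A ω, B ω)) p ≤ prOf μ B p.2 := by
  apply prOf_mono
  intro ω hω
  simp only [Set.mem_preimage, Set.mem_singleton_iff] at hω ⊢
  rw [← hω]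

end PrOf

lemma sum_prod_fiber {α β γ : Type*} [Fintype α] [Fintype β] [DecidableEq α] [DecidableEq γ]
    (f : α → ℝ) (g : β → ℝ) (r : β → γ) (x : α) (c : γ) :
    ∑ p ∈ Finset.univ.filter (fun p : α × β => (p.1, r p.2) = (x, c)), f p.1 * g p.2
      = f x * ∑ z ∈ Finset.univ.filter (fun z => r z = c), g z := by
  rw [Finset.mul_sum, Finset.sum_filter, Finset.sum_filter, Fintype.sum_prod_type]
  rw [Finset.sum_eq_single x]
  · apply Finset.sum_congr rfl
    intro z _
    simp [Prod.ext_iff]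
  · intro a _ hax
    apply Finset.sum_eq_zero
    intro z _
    simp [Prod.ext_iff, hax]
  · simp

/-- Abstract data-processing inequality for KL sums over product alphabets. -/
lemma abstract_dpi {α β γ : Type*} [Fintype α] [Fintype β] [Fintype γ]
    [DecidableEq α] [DecidableEq β] [DecidableEq γ]
    (P2 : α × β → ℝ) (P1 : α × γ → ℝ) (f : α → ℝ) (g2 : β → ℝ) (g1 : γ → ℝ) (r : β → γ)
    (hP2 : ∀ p, 0 ≤ P2 p) (hf : ∀ x, 0 ≤ f x) (hg2 : ∀ z, 0 ≤ g2 z)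
    (hzero : ∀ p : α × β, f p.1 * g2 p.2 = 0 → P2 p = 0)
    (hP1 : ∀ q : α × γ,
      P1 q = ∑ p ∈ Finset.univ.filter (fun p : α × β => (p.1, r p.2) = q), P2 p)
    (hg1 : ∀ c, g1 c = ∑ z ∈ Finset.univ.filter (fun z => r z = c), g2 z) :
    ∑ q : α × γ, klT (P1 q) (f q.1 * g1 q.2) ≤ ∑ p : α × β, klT (P2 p) (f p.1 * g2 p.2) := by
  refine le_trans (le_of_eq ?_) (sum_klT_comp_le P2 (fun p => f p.1 * g2 p.2)
    (fun p => (p.1, r p.2)) hP2 (fun p => mul_nonneg (hf _) (hg2 _)) hzero)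
  apply Finset.sum_congr rfl
  intro q _
  obtain ⟨x, c⟩ := q
  show klT (P1 (x, c)) (f x * g1 c) = _
  rw [hP1 (x, c), hg1 c, ← sum_prod_fiber f g2 r x c]

/-- Abstract generalized Fano inequality. -/
lemma abstract_fano {γ : Type*} [Fintype γ] [DecidableEq γ]
    (P : γ × γ → ℝ) (f g : γ → ℝ) (c : ℝ)
    (hP : ∀ p, 0 ≤ P p) (hf : ∀ y, 0 ≤ f y) (hg : ∀ y, 0 ≤ g y)
    (hfc : ∀ y, f y ≤ c) (hc : 0 < c)
    (hsumP : ∑ p : γ × γ, P p = 1) (hsumg : ∑ y : γ, g y = 1) (hsumf : ∑ y : γ, f y = 1)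
    (hzero : ∀ p : γ × γ, f p.1 * g p.2 = 0 → P p = 0)
    (e : ℝ)
    (he : e = ∑ p ∈ Finset.univ.filter (fun p : γ × γ => decide (p.1 = p.2) = false), P p) :
    (- Real.log c) * (1 - e) - (Real.negMulLog e + Real.negMulLog (1 - e))
      ≤ ∑ p : γ × γ, klT (P p) (f p.1 * g p.2) := by
  classical
  have key := sum_klT_comp_le (β := Bool) P (fun p => f p.1 * g p.2)
    (fun p => decide (p.1 = p.2)) hP (fun p => mul_nonneg (hf _) (hg _)) hzero
  beta_reduce at key
  refine le_trans ?_ key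
  rw [Fintype.sum_bool]
  -- abbreviations
  set St := ∑ p ∈ Finset.univ.filter
    (fun p : γ × γ => decide (p.1 = p.2) = true), P p with hSt
  set Sf := ∑ p ∈ Finset.univ.filter
    (fun p : γ × γ => decide (p.1 = p.2) = false), P p with hSf
  set Tt := ∑ p ∈ Finset.univ.filter
    (fun p : γ × γ => decide (p.1 = p.2) = true), f p.1 * g p.2 with hTt
  set Tf := ∑ p ∈ Finset.univ.filter
    (fun p : γ × γ => decide (p.1 = p.2) = false), f p.1 * g p.2 with hTf
  have hSt_nn : 0 ≤ St := Finset.sum_nonneg (fun p _ => hP p)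
  have hSf_nn : 0 ≤ Sf := Finset.sum_nonneg (fun p _ => hP p)
  have hTt_nn : 0 ≤ Tt := Finset.sum_nonneg (fun p _ => mul_nonneg (hf _) (hg _))
  have hTf_nn : 0 ≤ Tf := Finset.sum_nonneg (fun p _ => mul_nonneg (hf _) (hg _))
  have hsplit : St + Sf = 1 := by
    have hfib := Finset.sum_fiberwise (Finset.univ : Finset (γ × γ))
      (fun p => decide (p.1 = p.2)) P
    rw [Fintype.sum_bool, hsumP] at hfib
    exact hfib
  have hSt1 : St = 1 - e := by rw [he]; linarith
  -- T true ≤ c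
  have hTt_le : Tt ≤ c := by
    have h1 : Tt = ∑ y : γ, f y * g y := by
      rw [hTt, Finset.sum_filter, Fintype.sum_prod_type]
      apply Finset.sum_congr rfl
      intro x _
      simp only [decide_eq_true_eq]
      rw [Finset.sum_ite_eq]
      simp
    rw [h1]
    calc ∑ y : γ, f y * g y ≤ ∑ y : γ, c * g y :=
          Finset.sum_le_sum (fun y _ => mul_le_mul_of_nonneg_right (hfc y) (hg y))
      _ = c := by rw [← Finset.mul_sum, hsumg, mul_one]
  -- T false ≤ 1
  have hTf_le : Tf ≤ 1 := by
    calc Tf ≤ ∑ p : γ × γ, f p.1 * g p.2 :=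
          Finset.sum_le_sum_of_subset_of_nonneg (Finset.filter_subset _ _)
            (fun p _ _ => mul_nonneg (hf _) (hg _))
      _ = 1 := by
          rw [Fintype.sum_prod_type]
          have : ∀ x : γ, ∑ y : γ, f x * g y = f x := by
            intro x
            rw [← Finset.mul_sum, hsumg, mul_one]
          rw [Finset.sum_congr rfl (fun x _ => this x), hsumf]
  -- zero propagation
  have hfz : ∀ (b : Bool),
      (∑ p ∈ Finset.univ.filter (fun p : γ × γ => decide (p.1 = p.2) = b),
        f p.1 * g p.2) = 0 →
      (∑ p ∈ Finset.univ.filter (fun p : γ × γ => decide (p.1 = p.2) = b), P p) = 0 := by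
    intro b hTb
    apply Finset.sum_eq_zero
    intro p hp
    apply hzero
    exact (Finset.sum_eq_zero_iff_of_nonneg
      (fun p _ => mul_nonneg (hf _) (hg _))).mp hTb p hp
  have h1 : St * Real.log St - St * Real.log c ≤ klT St Tt :=
    klT_ge St Tt c hSt_nn hTt_nn hTt_le hc (fun h => hfz true h)
  have h2 : Sf * Real.log Sf - Sf * Real.log 1 ≤ klT Sf Tf :=
    klT_ge Sf Tf 1 hSf_nn hTf_nn hTf_le one_pos (fun h => hfz false h)
  refine le_trans (le_of_eq ?_) (add_le_add h1 h2)
  rw [Real.log_one, hSt1, ← he]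
  simp only [Real.negMulLog, neg_mul]
  ring

end Stmt8Aux

/-- generalized Fano inequality: for a stationary process `Y` on a finite
alphabet and any predictor r : 𝒴^k → 𝒴 with error probability P_e = Pr(r(Y_1^k) ≠ Y_{k+1}),
I(Y_{k+1} ; Y_1^k) ≥ I(Y_{k+1} ; r(Y_1^k)) ≥ −log(max_y p_Y(y)) (1 − P_e) − h(P_e),
where h is the binary entropy function. -/
theorem stmt8 {Ω : Type*} [MeasurableSpace Ω]
    {𝒴 : Type*} [Fintype 𝒴] [DecidableEq 𝒴] [Nonempty 𝒴]
    [MeasurableSpace 𝒴] [MeasurableSingletonClass 𝒴]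
    (μ : Measure Ω) [IsProbabilityMeasure μ] (Y : ℕ → Ω → 𝒴)
    (hmeas : ∀ n, Measurable (Y n)) (hstat : StationaryProc μ Y)
    (k : ℕ) (r : (Fin k → 𝒴) → 𝒴) :
    mutInfOf μ (Y k) (fun ω => r (procSeg Y 0 k ω)) ≤ mutInfOf μ (Y k) (procSeg Y 0 k) ∧
    (- Real.log (Finset.univ.sup' Finset.univ_nonempty (fun y => prOf μ (Y 0) y))) *
        (1 - (μ {ω | r (procSeg Y 0 k ω) ≠ Y k ω}).toReal) -
      (Real.negMulLog ((μ {ω | r (procSeg Y 0 k ω) ≠ Y k ω}).toReal) +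
        Real.negMulLog (1 - (μ {ω | r (procSeg Y 0 k ω) ≠ Y k ω}).toReal)) ≤
      mutInfOf μ (Y k) (fun ω => r (procSeg Y 0 k ω)) := by
  classical
  -- measurability of fibers
  have hY : ∀ n : ℕ, ∀ y : 𝒴, MeasurableSet (Y n ⁻¹' {y}) :=
    fun n y => hmeas n (measurableSet_singleton _)
  have hseg : ∀ m n : ℕ, ∀ z : Fin n → 𝒴, MeasurableSet (procSeg Y m n ⁻¹' {z}) := by
    intro m n z
    have hset : procSeg Y m n ⁻¹' {z} = ⋂ i : Fin n, Y (m + i.val) ⁻¹' {z i} := by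
      ext ω
      simp only [Set.mem_preimage, Set.mem_singleton_iff, Set.mem_iInter, funext_iff]
      rfl
    rw [hset]
    exact MeasurableSet.iInter (fun i => hY _ _)
  have hpairB : ∀ p : 𝒴 × (Fin k → 𝒴),
      MeasurableSet ((fun ω => (Y k ω, procSeg Y 0 k ω)) ⁻¹' {p}) := by
    intro p
    have hset : (fun ω => (Y k ω, procSeg Y 0 k ω)) ⁻¹' {p}
        = Y k ⁻¹' {p.1} ∩ procSeg Y 0 k ⁻¹' {p.2} := by
      ext ω
      simp only [Set.mem_preimage, Set.mem_singleton_iff, Set.mem_inter_iff, Prod.ext_iff]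
    rw [hset]
    exact (hY k p.1).inter (hseg 0 k p.2)
  have hYhset : ∀ c : 𝒴, MeasurableSet ((fun ω => r (procSeg Y 0 k ω)) ⁻¹' {c}) := by
    intro c
    have hset : (fun ω => r (procSeg Y 0 k ω)) ⁻¹' {c}
        = ⋃ z ∈ {z : Fin k → 𝒴 | r z = c}, procSeg Y 0 k ⁻¹' {z} := by
      ext ω
      simp only [Set.mem_preimage, Set.mem_singleton_iff, Set.mem_iUnion, Set.mem_setOf_eq]
      constructor
      · intro h; exact ⟨procSeg Y 0 k ω, h, rfl⟩
      · rintro ⟨z, hz, hωz⟩; rw [hωz]; exact hz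
    rw [hset]
    exact MeasurableSet.biUnion (Set.to_countable _) (fun z _ => hseg 0 k z)
  have hpairR : ∀ p : 𝒴 × 𝒴,
      MeasurableSet ((fun ω => (Y k ω, r (procSeg Y 0 k ω))) ⁻¹' {p}) := by
    intro p
    have hset : (fun ω => (Y k ω, r (procSeg Y 0 k ω))) ⁻¹' {p}
        = Y k ⁻¹' {p.1} ∩ (fun ω => r (procSeg Y 0 k ω)) ⁻¹' {p.2} := by
      ext ω
      simp only [Set.mem_preimage, Set.mem_singleton_iff, Set.mem_inter_iff, Prod.ext_iff]
    rw [hset]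
    exact (hY k p.1).inter (hYhset p.2)
  -- equal marginals by stationarity
  have hmarg : ∀ n : ℕ, ∀ y : 𝒴, prOf μ (Y n) y = prOf μ (Y 0) y := by
    intro n
    induction n with
    | zero => intro y; rfl
    | succ n ih =>
      intro y
      have h0 : prOf μ (Y n) y
          = ∑ z ∈ Finset.univ.filter (fun z : Fin (n+1) → 𝒴 => z (Fin.last n) = y),
              prOf μ (procSeg Y 0 (n+1)) z := by
        have he : Y n = fun ω => (procSeg Y 0 (n+1) ω) (Fin.last n) := by
          funext ω
          simp [procSeg]
        rw [he]
        exact prOf_comp μ (procSeg Y 0 (n+1)) (hseg 0 (n+1)) (fun z => z (Fin.last n)) y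
      have h1 : prOf μ (Y (n+1)) y
          = ∑ z ∈ Finset.univ.filter (fun z : Fin (n+1) → 𝒴 => z (Fin.last n) = y),
              prOf μ (procSeg Y 1 (n+1)) z := by
        have he : Y (n+1) = fun ω => (procSeg Y 1 (n+1) ω) (Fin.last n) := by
          funext ω
          simp [procSeg, Nat.add_comm]
        rw [he]
        exact prOf_comp μ (procSeg Y 1 (n+1)) (hseg 1 (n+1)) (fun z => z (Fin.last n)) y
      have hstep : ∀ z : Fin (n+1) → 𝒴,
          prOf μ (procSeg Y 0 (n+1)) z = prOf μ (procSeg Y 1 (n+1)) z := by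
        intro z
        have hs := hstat (n+1) z
        have e0 : {ω | ∀ i : Fin (n+1), Y i.val ω = z i} = procSeg Y 0 (n+1) ⁻¹' {z} := by
          ext ω
          simp only [Set.mem_preimage, Set.mem_singleton_iff, Set.mem_setOf_eq, funext_iff,
            procSeg, Nat.zero_add]
        have e1 : {ω | ∀ i : Fin (n+1), Y (i.val + 1) ω = z i}
            = procSeg Y 1 (n+1) ⁻¹' {z} := by
          ext ω
          simp only [Set.mem_preimage, Set.mem_singleton_iff, Set.mem_setOf_eq, funext_iff,
            procSeg, Nat.add_comm]
        unfold prOf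
        rw [← e0, ← e1, hs]
      calc prOf μ (Y (n+1)) y
          = ∑ z ∈ Finset.univ.filter (fun z : Fin (n+1) → 𝒴 => z (Fin.last n) = y),
              prOf μ (procSeg Y 1 (n+1)) z := h1
        _ = ∑ z ∈ Finset.univ.filter (fun z : Fin (n+1) → 𝒴 => z (Fin.last n) = y),
              prOf μ (procSeg Y 0 (n+1)) z :=
            Finset.sum_congr rfl (fun z _ => (hstep z).symm)
        _ = prOf μ (Y n) y := h0.symm
        _ = prOf μ (Y 0) y := ih y
  -- the two KL representations of the mutual informations
  have I1 : mutInfOf μ (Y k) (fun ω => r (procSeg Y 0 k ω))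
      = ∑ p : 𝒴 × 𝒴, klT (prOf μ (fun ω => (Y k ω, r (procSeg Y 0 k ω))) p)
          (prOf μ (Y k) p.1 * prOf μ (fun ω => r (procSeg Y 0 k ω)) p.2) :=
    mutInfOf_eq_sum_klT μ (Y k) (fun ω => r (procSeg Y 0 k ω)) hpairR
  have I2 : mutInfOf μ (Y k) (procSeg Y 0 k)
      = ∑ p : 𝒴 × (Fin k → 𝒴), klT (prOf μ (fun ω => (Y k ω, procSeg Y 0 k ω)) p)
          (prOf μ (Y k) p.1 * prOf μ (procSeg Y 0 k) p.2) :=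
    mutInfOf_eq_sum_klT μ (Y k) (procSeg Y 0 k) hpairB
  -- helper nonnegativity and zero-propagation facts
  have hzero2 : ∀ p : 𝒴 × (Fin k → 𝒴),
      prOf μ (Y k) p.1 * prOf μ (procSeg Y 0 k) p.2 = 0 →
      prOf μ (fun ω => (Y k ω, procSeg Y 0 k ω)) p = 0 := by
    intro p hp
    rcases mul_eq_zero.mp hp with h | h
    · exact le_antisymm (h ▸ prOf_pair_le_fst μ _ _ p) (prOf_nonneg μ _ p)
    · exact le_antisymm (h ▸ prOf_pair_le_snd μ _ _ p) (prOf_nonneg μ _ p)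
  have hzero1 : ∀ p : 𝒴 × 𝒴,
      prOf μ (Y k) p.1 * prOf μ (fun ω => r (procSeg Y 0 k ω)) p.2 = 0 →
      prOf μ (fun ω => (Y k ω, r (procSeg Y 0 k ω))) p = 0 := by
    intro p hp
    rcases mul_eq_zero.mp hp with h | h
    · exact le_antisymm (h ▸ prOf_pair_le_fst μ _ _ p) (prOf_nonneg μ _ p)
    · exact le_antisymm (h ▸ prOf_pair_le_snd μ _ _ p) (prOf_nonneg μ _ p)
  constructor
  · -- data processing inequality
    rw [I1, I2]
    apply abstract_dpi (P2 := prOf μ (fun ω => (Y k ω, procSeg Y 0 k ω)))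
      (P1 := prOf μ (fun ω => (Y k ω, r (procSeg Y 0 k ω))))
      (f := prOf μ (Y k)) (g2 := prOf μ (procSeg Y 0 k))
      (g1 := prOf μ (fun ω => r (procSeg Y 0 k ω))) (r := r)
      (fun p => prOf_nonneg μ _ p) (fun x => prOf_nonneg μ _ x)
      (fun z => prOf_nonneg μ _ z) hzero2
    · intro q
      exact prOf_comp μ (fun ω => (Y k ω, procSeg Y 0 k ω)) hpairB
        (fun p => (p.1, r p.2)) q
    · intro c
      exact prOf_comp μ (procSeg Y 0 k) (hseg 0 k) r c
  · -- generalized Fano inequality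
    rw [I1]
    set pmax := Finset.univ.sup' Finset.univ_nonempty (fun y => prOf μ (Y 0) y) with hpmax
    have hfc : ∀ y : 𝒴, prOf μ (Y k) y ≤ pmax := by
      intro y
      rw [hmarg k y]
      exact Finset.le_sup' _ (Finset.mem_univ y)
    have hpmax_pos : 0 < pmax := by
      by_contra hcon
      push_neg at hcon
      have hle : ∑ y : 𝒴, prOf μ (Y 0) y ≤ 0 :=
        Finset.sum_nonpos (fun y _ =>
          le_trans (Finset.le_sup' _ (Finset.mem_univ y)) hcon)
      rw [sum_prOf μ (Y 0) (hY 0)] at hle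
      linarith
    have hPe : (μ {ω | r (procSeg Y 0 k ω) ≠ Y k ω}).toReal
        = ∑ p ∈ Finset.univ.filter (fun p : 𝒴 × 𝒴 => decide (p.1 = p.2) = false),
            prOf μ (fun ω => (Y k ω, r (procSeg Y 0 k ω))) p := by
      have hc := prOf_comp μ (fun ω => (Y k ω, r (procSeg Y 0 k ω))) hpairR
        (fun p => decide (p.1 = p.2)) false
      rw [← hc]
      unfold prOf
      congr 2
      ext ω
      simp only [Set.mem_setOf_eq, Set.mem_preimage, Set.mem_singleton_iff,
        decide_eq_false_iff_not]
      exact ne_comm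
    exact abstract_fano (prOf μ (fun ω => (Y k ω, r (procSeg Y 0 k ω))))
      (prOf μ (Y k)) (prOf μ (fun ω => r (procSeg Y 0 k ω))) pmax
      (fun p => prOf_nonneg μ _ p) (fun y => prOf_nonneg μ _ y)
      (fun y => prOf_nonneg μ _ y) hfc hpmax_pos
      (sum_prOf μ _ hpairR) (sum_prOf μ _ hYhset) (sum_prOf μ _ (hY k))
      hzero1 _ hPe
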